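/- The coherence of formation is additive under tensor products: for density matrices ρ on ℂ^d and σ on ℂ^{d'} (with the tensor-product incoherent basis on ℂ^d ⊗ ℂ^{d'}), C_f(ρ ⊗ σ) = C_f(ρ) + C_f(σ). -/

import Mathlib

namespace Coherence

open Matrix
open scoped BigOperators ComplexOrder

variable {ι κ : Type*} [Fintype ι] [DecidableEq ι] [Fintype κ] [DecidableEq κ]

/-- A density matrix: positive semidefinite with unit trace. -/
def IsDensity (ρ : Matrix ι ι ℂ) : Prop := ρ.PosSemidef ∧ ρ.trace = 1

/-- The dephasing (decohering) map Δ in the fixed (incoherent) basis. -/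
def dephase (ρ : Matrix ι ι ℂ) : Matrix ι ι ℂ := Matrix.diagonal (fun i => ρ i i)

/-- The pure state |v⟩⟨v| associated with a vector `v`. -/
def pureState (v : ι → ℂ) : Matrix ι ι ℂ := Matrix.of fun i j => v i * star (v j)

/-- `v` is a unit vector. -/
def IsUnitVec (v : ι → ℂ) : Prop := ∑ i, ‖v i‖ ^ 2 = 1

/-- An incoherent Kraus operator: each column has at most one nonzero entry,
i.e. `K = ∑ i c(i) |j(i)⟩⟨i|` for a function `j` on basis indices. -/
def IncoherentKraus (K : Matrix κ ι ℂ) : Prop :=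
  ∀ i : ι, ∃ j : κ, ∀ j' : κ, K j' i ≠ 0 → j' = j

/-- A strictly incoherent Kraus operator: `K` and `K†` are both incoherent. -/
def StrictlyIncoherentKraus (K : Matrix κ ι ℂ) : Prop :=
  IncoherentKraus K ∧ IncoherentKraus Kᴴ

/-- An incoherent operation: a cptp map admitting a Kraus representation by
incoherent Kraus operators. -/
def IsIncoherentOp (T : Matrix ι ι ℂ → Matrix κ κ ℂ) : Prop :=
  ∃ (m : ℕ) (K : Fin m → Matrix κ ι ℂ),
    (∀ ℓ, IncoherentKraus (K ℓ)) ∧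
    (∑ ℓ, (K ℓ)ᴴ * K ℓ = 1) ∧
    (∀ ρ, T ρ = ∑ ℓ, K ℓ * ρ * (K ℓ)ᴴ)

/-- A strictly incoherent operation. -/
def IsStrictlyIncoherentOp (T : Matrix ι ι ℂ → Matrix κ κ ℂ) : Prop :=
  ∃ (m : ℕ) (K : Fin m → Matrix κ ι ℂ),
    (∀ ℓ, StrictlyIncoherentKraus (K ℓ)) ∧
    (∑ ℓ, (K ℓ)ᴴ * K ℓ = 1) ∧
    (∀ ρ, T ρ = ∑ ℓ, K ℓ * ρ * (K ℓ)ᴴ)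

/-- Functional calculus for Hermitian matrices (junk value `0` otherwise). -/
noncomputable def matFun (f : ℝ → ℝ) (A : Matrix ι ι ℂ) : Matrix ι ι ℂ :=
  if h : A.IsHermitian then
    (h.eigenvectorUnitary : Matrix ι ι ℂ) *
      Matrix.diagonal (fun i => (f (h.eigenvalues i) : ℂ)) *
      (star (h.eigenvectorUnitary : Matrix ι ι ℂ))
  else 0

/-- Von Neumann entropy `S(ρ) = −tr ρ log₂ ρ` (with the convention 0 log 0 = 0). -/
noncomputable def vN (ρ : Matrix ι ι ℂ) : ℝ :=
  if h : ρ.IsHermitian then -∑ i, h.eigenvalues i * Real.logb 2 (h.eigenvalues i) else 0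

noncomputable def matLog2 (A : Matrix ι ι ℂ) : Matrix ι ι ℂ := matFun (Real.logb 2) A

noncomputable def matSqrt (A : Matrix ι ι ℂ) : Matrix ι ι ℂ := matFun Real.sqrt A

/-- Quantum relative entropy `S(ρ‖σ) = tr ρ (log₂ ρ − log₂ σ)`. -/
noncomputable def relEnt (ρ σ : Matrix ι ι ℂ) : ℝ :=
  ((ρ * (matLog2 ρ - matLog2 σ)).trace).re

/-- Fidelity `F(ρ,σ) = tr √(√ρ σ √ρ)`. -/
noncomputable def fidelity (ρ σ : Matrix ι ι ℂ) : ℝ :=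
  ((matSqrt (matSqrt ρ * σ * matSqrt ρ)).trace).re

/-- Trace norm `‖A‖₁ = tr √(A†A)`. -/
noncomputable def traceNorm (A : Matrix ι ι ℂ) : ℝ :=
  ((matSqrt (Aᴴ * A)).trace).re

/-- Bures distance `B(ρ,σ) = √2 √(1 − F(ρ,σ))`. -/
noncomputable def bures (ρ σ : Matrix ι ι ℂ) : ℝ :=
  Real.sqrt 2 * Real.sqrt (1 - fidelity ρ σ)

/-- Binary entropy function. -/
noncomputable def binEnt (x : ℝ) : ℝ :=
  -(x * Real.logb 2 x) - (1 - x) * Real.logb 2 (1 - x)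

/-- The `n`-fold tensor (Kronecker) power of a matrix, with indices the product basis. -/
def tpow (ρ : Matrix ι ι ℂ) (n : ℕ) : Matrix (Fin n → ι) (Fin n → ι) ℂ :=
  Matrix.of fun i j => ∏ t, ρ (i t) (j t)

/-- The unit (qubit maximally coherent) state Φ₂. -/
noncomputable def Phi2 : Matrix (Fin 2) (Fin 2) ℂ := Matrix.of fun _ _ => (1 / 2 : ℂ)

/-- Relative entropy of coherence `C_r(ρ) = S(Δ(ρ)) − S(ρ)`. -/
noncomputable def Cr (ρ : Matrix ι ι ℂ) : ℝ := vN (dephase ρ) - vN ρ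

/-- Coherence of formation: the least average entropy of coherence over finite
pure-state decompositions of `ρ`. -/
noncomputable def Cf (ρ : Matrix ι ι ℂ) : ℝ :=
  sInf {x | ∃ (m : ℕ) (p : Fin m → ℝ) (v : Fin m → ι → ℂ),
    (∀ k, 0 ≤ p k) ∧ (∀ k, IsUnitVec (v k)) ∧
    ρ = ∑ k, (p k : ℂ) • pureState (v k) ∧
    x = ∑ k, p k * vN (dephase (pureState (v k)))}

/-- `R` is an achievable coherence-distillation rate for `ρ`. -/
def DistillRate {d : ℕ} (ρ : Matrix (Fin d) (Fin d) ℂ) (R : ℝ) : Prop :=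
  0 ≤ R ∧ ∀ ε > 0, ∃ N : ℕ, ∀ n ≥ N,
    ∃ T : Matrix (Fin n → Fin d) (Fin n → Fin d) ℂ →
          Matrix (Fin ⌊(n : ℝ) * R⌋₊ → Fin 2) (Fin ⌊(n : ℝ) * R⌋₊ → Fin 2) ℂ,
      IsIncoherentOp T ∧ 1 - ε ≤ fidelity (T (tpow ρ n)) (tpow Phi2 ⌊(n : ℝ) * R⌋₊)

/-- Distillable coherence. -/
noncomputable def Cd {d : ℕ} (ρ : Matrix (Fin d) (Fin d) ℂ) : ℝ :=
  sSup {R | DistillRate ρ R}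

/-- `R` is an achievable coherence-formation rate for `ρ`. -/
def FormRate {d : ℕ} (ρ : Matrix (Fin d) (Fin d) ℂ) (R : ℝ) : Prop :=
  0 ≤ R ∧ ∀ ε > 0, ∃ N : ℕ, ∀ n ≥ N,
    ∃ T : Matrix (Fin ⌈(n : ℝ) * R⌉₊ → Fin 2) (Fin ⌈(n : ℝ) * R⌉₊ → Fin 2) ℂ →
          Matrix (Fin n → Fin d) (Fin n → Fin d) ℂ,
      IsIncoherentOp T ∧ 1 - ε ≤ fidelity (T (tpow Phi2 ⌈(n : ℝ) * R⌉₊)) (tpow ρ n)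

/-- Coherence cost. -/
noncomputable def Cc {d : ℕ} (ρ : Matrix (Fin d) (Fin d) ℂ) : ℝ :=
  sInf {R | FormRate ρ R}

/-- Sum of the `t` largest entries of the vector `p` (as a sup over size-`t` subsets). -/
noncomputable def sumTop (p : ι → ℝ) (t : ℕ) : ℝ :=
  sSup {x | ∃ A : Finset ι, A.card = t ∧ x = ∑ i ∈ A, p i}

/-- The spectrum of a Hermitian matrix (junk value `0` otherwise). -/
noncomputable def matSpectrum (A : Matrix ι ι ℂ) : ι → ℝ :=
  if h : A.IsHermitian then h.eigenvalues else 0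

/-- `A ≻ B`: the spectrum of `A` majorizes the spectrum of `B`. -/
def MajorizesMat (A B : Matrix ι ι ℂ) : Prop :=
  (∀ t : ℕ, sumTop (matSpectrum B) t ≤ sumTop (matSpectrum A) t) ∧
  ∑ i, matSpectrum A i = ∑ i, matSpectrum B i


/-! ### Auxiliary classical entropy lemmas -/

noncomputable def ent {α : Type*} [Fintype α] (f : α → ℝ) : ℝ :=
  ∑ a, -(f a * Real.logb 2 (f a))

lemma ent_nonneg {α : Type*} [Fintype α] {f : α → ℝ} (h0 : ∀ a, 0 ≤ f a)
    (h1 : ∑ a, f a ≤ 1) : 0 ≤ ent f := by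
  apply Finset.sum_nonneg
  intro a _
  have hle : f a ≤ 1 := le_trans (Finset.single_le_sum (fun b _ => h0 b) (Finset.mem_univ a)) h1
  have := Real.logb_nonpos one_lt_two (h0 a) hle
  nlinarith [h0 a]

lemma gibbs {α : Type*} [Fintype α] (t s : α → ℝ) (ht : ∀ a, 0 ≤ t a)
    (hs : ∀ a, 0 ≤ s a) (hts : ∀ a, 0 < t a → 0 < s a)
    (hsumt : ∑ a, t a = 1) (hsums : ∑ a, s a ≤ 1) :
    ∑ a, t a * Real.logb 2 (s a / t a) ≤ 0 := by
  have hlog2 : 0 < Real.log 2 := Real.log_pos one_lt_two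
  have key : ∀ a, t a * Real.logb 2 (s a / t a) ≤ (s a - t a) / Real.log 2 := by
    intro a
    rcases eq_or_lt_of_le (ht a) with h0 | h0
    · rw [← h0, zero_mul, sub_zero]
      exact div_nonneg (hs a) hlog2.le
    · have hsa := hts a h0
      have h1 : Real.log (s a / t a) ≤ s a / t a - 1 :=
        Real.log_le_sub_one_of_pos (div_pos hsa h0)
      have h2 : t a * Real.logb 2 (s a / t a) ≤ t a * ((s a / t a - 1) / Real.log 2) := by
        rw [Real.logb]
        apply mul_le_mul_of_nonneg_left _ h0.le
        exact div_le_div_of_nonneg_right h1 hlog2.le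
      refine h2.trans (le_of_eq ?_)
      field_simp
  refine le_trans (Finset.sum_le_sum (fun a _ => key a)) ?_
  rw [← Finset.sum_div, Finset.sum_sub_distrib, hsumt]
  apply div_nonpos_of_nonpos_of_nonneg _ hlog2.le
  linarith

lemma weighted_ent_eq {α : Type*} [Fintype α] (c : ℝ) (f : α → ℝ) (hc : 0 ≤ c)
    (hf : ∀ i, 0 ≤ f i) (hfc : ∀ i, f i ≤ c) :
    c * ent (fun i => f i / c) = ∑ i, -(f i * Real.logb 2 (f i / c)) := by
  rcases eq_or_lt_of_le hc with h0 | h0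
  · have hz : ∀ i, f i = 0 := fun i => le_antisymm (by rw [h0]; exact hfc i) (hf i)
    rw [← h0, zero_mul]
    symm
    apply Finset.sum_eq_zero
    intro i _
    rw [hz i, zero_mul, neg_zero]
  · rw [ent, Finset.mul_sum]
    congr 1
    funext i
    rw [mul_neg, ← mul_assoc, mul_div_cancel₀ _ h0.ne']

lemma condent_le_ent {α β : Type*} [Fintype α] [Fintype β] (t : α × β → ℝ)
    (ht : ∀ a, 0 ≤ t a) (hsum : ∑ a, t a = 1) :
    (∑ a : α × β, -(t a * Real.logb 2 (t a / (∑ i, t (i, a.2))))) +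
    (∑ a : α × β, -(t a * Real.logb 2 (t a / (∑ j, t (a.1, j))))) ≤ ent t := by
  set q : β → ℝ := fun j => ∑ i, t (i, j) with hq
  set r : α → ℝ := fun i => ∑ j, t (i, j) with hr
  have hqt : ∀ i j, t (i, j) ≤ q j := fun i j =>
    Finset.single_le_sum (fun b _ => ht (b, j)) (Finset.mem_univ i)
  have hrt : ∀ i j, t (i, j) ≤ r i := fun i j =>
    Finset.single_le_sum (fun b _ => ht (i, b)) (Finset.mem_univ j)
  have hsums : ∑ a : α × β, q a.2 * r a.1 ≤ 1 := by
    have hq1 : ∑ j, q j = 1 := by rw [hq, ← hsum, Fintype.sum_prod_type, Finset.sum_comm]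
    have hr1 : ∑ i, r i = 1 := by rw [hr, ← hsum, Fintype.sum_prod_type]
    rw [Fintype.sum_prod_type]
    calc (∑ i, ∑ j, q j * r i) = (∑ i, r i) * (∑ j, q j) := by
          rw [Finset.sum_mul]
          congr 1; funext i
          rw [Finset.mul_sum]
          congr 1; funext j
          ring
      _ ≤ 1 := by rw [hq1, hr1, one_mul]
  have hgibbs := gibbs t (fun a => q a.2 * r a.1) ht
    (fun a => mul_nonneg (Finset.sum_nonneg fun b _ => ht _) (Finset.sum_nonneg fun b _ => ht _))
    (fun a hpos => mul_pos (lt_of_lt_of_le hpos (hqt a.1 a.2)) (lt_of_lt_of_le hpos (hrt a.1 a.2)))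
    hsum hsums
  have hpt : ∀ a : α × β, -(t a * Real.logb 2 (t a / q a.2)) + -(t a * Real.logb 2 (t a / r a.1))
      = -(t a * Real.logb 2 (t a)) + t a * Real.logb 2 ((q a.2 * r a.1) / t a) := by
    rintro ⟨i, j⟩
    rcases eq_or_lt_of_le (ht (i, j)) with h0 | h0
    · simp [← h0]
    · have hqp : 0 < q j := lt_of_lt_of_le h0 (hqt i j)
      have hrp : 0 < r i := lt_of_lt_of_le h0 (hrt i j)
      rw [Real.logb_div h0.ne' hqp.ne', Real.logb_div h0.ne' hrp.ne',
        Real.logb_div (mul_pos hqp hrp).ne' h0.ne', Real.logb_mul hqp.ne' hrp.ne']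
      ring
  calc (∑ a : α × β, -(t a * Real.logb 2 (t a / q a.2))) +
        (∑ a : α × β, -(t a * Real.logb 2 (t a / r a.1)))
      = ∑ a : α × β, (-(t a * Real.logb 2 (t a / q a.2)) + -(t a * Real.logb 2 (t a / r a.1))) := by
        rw [Finset.sum_add_distrib]
    _ = ∑ a : α × β, (-(t a * Real.logb 2 (t a)) + t a * Real.logb 2 ((q a.2 * r a.1) / t a)) :=
        Finset.sum_congr rfl (fun a _ => hpt a)
    _ = ent t + ∑ a : α × β, t a * Real.logb 2 ((q a.2 * r a.1) / t a) := by
        rw [Finset.sum_add_distrib]; rfl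
    _ ≤ ent t + 0 := by linarith [hgibbs]
    _ = ent t := add_zero _

lemma ent_prod {α β : Type*} [Fintype α] [Fintype β] (f : α → ℝ) (g : β → ℝ)
    (hf0 : ∀ a, 0 ≤ f a) (hg0 : ∀ b, 0 ≤ g b) (hf1 : ∑ a, f a = 1) (hg1 : ∑ b, g b = 1) :
    ent (fun p : α × β => f p.1 * g p.2) = ent f + ent g := by
  have key : ∀ a b, -(f a * g b * Real.logb 2 (f a * g b)) =
      g b * -(f a * Real.logb 2 (f a)) + f a * -(g b * Real.logb 2 (g b)) := by
    intro a b
    rcases eq_or_lt_of_le (hf0 a) with h0 | h0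
    · simp [← h0]
    rcases eq_or_lt_of_le (hg0 b) with h1 | h1
    · simp [← h1]
    rw [Real.logb_mul h0.ne' h1.ne']
    ring
  rw [ent, Fintype.sum_prod_type]
  calc (∑ a, ∑ b, -(f a * g b * Real.logb 2 (f a * g b)))
      = ∑ a, ∑ b, (g b * -(f a * Real.logb 2 (f a)) + f a * -(g b * Real.logb 2 (g b))) := by
        refine Finset.sum_congr rfl fun a _ => Finset.sum_congr rfl fun b _ => key a b
    _ = ent f + ent g := by
        rw [ent, ent]
        rw [Finset.sum_congr rfl (fun a (_ : a ∈ Finset.univ) => Finset.sum_add_distrib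
          (f := fun b => g b * -(f a * Real.logb 2 (f a)))
          (g := fun b => f a * -(g b * Real.logb 2 (g b))))]
        rw [Finset.sum_add_distrib]
        congr 1
        · rw [Finset.sum_congr rfl (fun a (_ : a ∈ Finset.univ) => (Finset.sum_mul ..).symm)]
          simp only [hg1, one_mul]
        · rw [Finset.sum_congr rfl (fun a (_ : a ∈ Finset.univ) => (Finset.mul_sum ..).symm)]
          rw [← Finset.sum_mul, hf1, one_mul]

/-! ### Spectral lemmas -/

open Polynomial in
lemma charpoly_eq_charpoly_diag_eig (A : Matrix ι ι ℂ) (hA : A.IsHermitian) :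
    A.charpoly = (Matrix.diagonal (fun i => (hA.eigenvalues i : ℂ))).charpoly := by
  set U : Matrix ι ι ℂ := (hA.eigenvectorUnitary : Matrix ι ι ℂ) with hUdef
  have hU1 : U * star U = 1 := (Matrix.mem_unitaryGroup_iff).mp hA.eigenvectorUnitary.2
  have hU2 : star U * U = 1 := mul_eq_one_comm.mp hU1
  have hsp : A = U * Matrix.diagonal (fun i => (hA.eigenvalues i : ℂ)) * star U := by
    simpa [Function.comp_def] using hA.spectral_theorem
  set D := Matrix.diagonal (fun i => (hA.eigenvalues i : ℂ)) with hD
  have hcm : charmatrix A = (C : ℂ →+* ℂ[X]).mapMatrix U * charmatrix D *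
      (C : ℂ →+* ℂ[X]).mapMatrix (star U) := by
    rw [charmatrix, charmatrix, hsp, mul_sub, sub_mul]
    congr 1
    · rw [← (Matrix.scalar_commute (X : ℂ[X]) (Commute.all _) ((C : ℂ →+* ℂ[X]).mapMatrix U)).eq,
        mul_assoc, ← _root_.map_mul ((C : ℂ →+* ℂ[X]).mapMatrix), hU1]
      simp
    · rw [← _root_.map_mul ((C : ℂ →+* ℂ[X]).mapMatrix), ← _root_.map_mul]
  have h1 : ((C : ℂ →+* ℂ[X]).mapMatrix (star U)).det * ((C : ℂ →+* ℂ[X]).mapMatrix U).det = 1 := by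
    rw [← det_mul, ← _root_.map_mul ((C : ℂ →+* ℂ[X]).mapMatrix), hU2]
    simp
  rw [Matrix.charpoly, Matrix.charpoly, hcm, det_mul, det_mul,
    show ((C : ℂ →+* ℂ[X]).mapMatrix U).det * (charmatrix D).det *
        ((C : ℂ →+* ℂ[X]).mapMatrix (star U)).det =
      (((C : ℂ →+* ℂ[X]).mapMatrix (star U)).det * ((C : ℂ →+* ℂ[X]).mapMatrix U).det) *
        (charmatrix D).det from by ring, h1, one_mul]

open Polynomial in
lemma roots_prod_form (a : ι → ℂ) :
    (∏ i, (X - C (a i))).roots = Finset.univ.val.map a := by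
  have h : ∏ i, (X - C (a i)) = ((Finset.univ.val.map a).map (fun r => X - C r)).prod := by
    rw [Multiset.map_map]; rfl
  rw [h, Polynomial.roots_multiset_prod_X_sub_C]

open Polynomial in
lemma charpoly_diag (a : ι → ℂ) :
    (Matrix.diagonal a).charpoly = ∏ i, (X - C (a i)) := by
  rw [Matrix.charpoly, ← Matrix.det_diagonal]
  congr 1
  ext i j
  by_cases hij : i = j
  · subst hij; simp
  · simp [hij, Matrix.diagonal_apply_ne _ hij]

lemma sum_g_eig_diag (f : ι → ℝ) (g : ℝ → ℝ)
    (h : (Matrix.diagonal (fun i => ((f i : ℝ) : ℂ))).IsHermitian) :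
    ∑ i, g (h.eigenvalues i) = ∑ i, g (f i) := by
  have hconj := charpoly_eq_charpoly_diag_eig _ h
  have hroots := congrArg Polynomial.roots (hconj.symm.trans (charpoly_diag _))
  rw [charpoly_diag, roots_prod_form, roots_prod_form] at hroots
  have hmm : Finset.univ.val.map h.eigenvalues = Finset.univ.val.map f := by
    apply Multiset.map_injective Complex.ofReal_injective
    rw [Multiset.map_map, Multiset.map_map]
    exact hroots
  have e1 : ∑ i, g (h.eigenvalues i) = ((Finset.univ.val.map h.eigenvalues).map g).sum := by
    rw [Multiset.map_map]; rfl
  have e2 : ∑ i, g (f i) = ((Finset.univ.val.map f).map g).sum := by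
    rw [Multiset.map_map]; rfl
  rw [e1, e2, hmm]

lemma vN_diag (f : ι → ℝ) : vN (Matrix.diagonal (fun i => ((f i : ℝ) : ℂ))) = ent f := by
  have h : (Matrix.diagonal (fun i => ((f i : ℝ) : ℂ))).IsHermitian := by
    rw [Matrix.isHermitian_diagonal_iff]
    intro i
    exact Complex.conj_ofReal _
  rw [vN, dif_pos h, ent, ← Finset.sum_neg_distrib]
  exact sum_g_eig_diag f (fun x => -(x * Real.logb 2 x)) h

noncomputable def H2 {α : Type*} [Fintype α] (v : α → ℂ) : ℝ := ent (fun i => ‖v i‖ ^ 2)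

lemma pureState_apply' (v : ι → ℂ) (i j : ι) : pureState v i j = v i * star (v j) := rfl

lemma pureState_diag (v : ι → ℂ) (i : ι) : pureState v i i = ((‖v i‖ ^ 2 : ℝ) : ℂ) := by
  rw [pureState_apply', show star (v i) = starRingEnd ℂ (v i) from rfl, RCLike.mul_conj]
  norm_cast

lemma dephase_pureState_eq (v : ι → ℂ) :
    dephase (pureState v) = Matrix.diagonal (fun i => ((‖v i‖ ^ 2 : ℝ) : ℂ)) := by
  have hfun : (fun i => pureState v i i) = fun i => ((‖v i‖ ^ 2 : ℝ) : ℂ) :=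
    funext fun i => pureState_diag v i
  show Matrix.diagonal (fun i => pureState v i i) = _
  rw [hfun]

lemma vN_dephase_pure (v : ι → ℂ) : vN (dephase (pureState v)) = H2 v := by
  rw [dephase_pureState_eq, vN_diag]; rfl

/-! ### The decomposition set -/

def CfSet (ρ : Matrix ι ι ℂ) : Set ℝ :=
  {x | ∃ (m : ℕ) (p : Fin m → ℝ) (v : Fin m → ι → ℂ),
    (∀ k, 0 ≤ p k) ∧ (∀ k, IsUnitVec (v k)) ∧
    ρ = ∑ k, (p k : ℂ) • pureState (v k) ∧
    x = ∑ k, p k * vN (dephase (pureState (v k)))}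

lemma Cf_eq_sInf (ρ : Matrix ι ι ℂ) : Cf ρ = sInf (CfSet ρ) := rfl

lemma trace_pureState {v : ι → ℂ} (hv : IsUnitVec v) : (pureState v).trace = 1 := by
  have h : (pureState v).trace = ∑ i, ((‖v i‖ ^ 2 : ℝ) : ℂ) := by
    rw [Matrix.trace]
    exact Finset.sum_congr rfl fun i _ => pureState_diag v i
  rw [h, ← Complex.ofReal_sum, hv, Complex.ofReal_one]

lemma sum_coeff_eq_one {β : Type*} [Fintype β] {ρ : Matrix ι ι ℂ} (htr : ρ.trace = 1)
    {p : β → ℝ} {v : β → ι → ℂ} (h1 : ∀ b, IsUnitVec (v b))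
    (h2 : ρ = ∑ b, (p b : ℂ) • pureState (v b)) : ∑ b, p b = 1 := by
  have h3 := congrArg Matrix.trace h2
  rw [htr, Matrix.trace_sum] at h3
  have h4 : ∀ b ∈ Finset.univ, ((p b : ℂ) • pureState (v b)).trace = (p b : ℂ) := by
    intro b _
    rw [Matrix.trace_smul, trace_pureState (h1 b), smul_eq_mul, mul_one]
  rw [Finset.sum_congr rfl h4, ← Complex.ofReal_sum] at h3
  exact_mod_cast h3.symm

lemma mem_CfSet {β : Type*} [Fintype β] {ρ : Matrix ι ι ℂ} (p : β → ℝ) (v : β → ι → ℂ)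
    (h0 : ∀ b, 0 ≤ p b) (h1 : ∀ b, IsUnitVec (v b))
    (h2 : ρ = ∑ b, (p b : ℂ) • pureState (v b)) :
    (∑ b, p b * vN (dephase (pureState (v b)))) ∈ CfSet ρ := by
  set e : β ≃ Fin (Fintype.card β) := Fintype.equivFin β with he
  refine ⟨Fintype.card β, fun k => p (e.symm k), fun k => v (e.symm k),
    fun k => h0 _, fun k => h1 _, ?_, ?_⟩
  · rw [h2]
    exact (Fintype.sum_equiv e.symm _ _ (fun k => rfl)).symm
  · exact (Fintype.sum_equiv e.symm _ _ (fun k => rfl)).symm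

lemma H2_nonneg {v : ι → ℂ} (hv : IsUnitVec v) : 0 ≤ H2 v :=
  ent_nonneg (fun i => by positivity) (le_of_eq hv)

lemma CfSet_nonneg {ρ : Matrix ι ι ℂ} {x : ℝ} (hx : x ∈ CfSet ρ) : 0 ≤ x := by
  obtain ⟨m, p, v, h0, h1, -, h3⟩ := hx
  rw [h3]
  apply Finset.sum_nonneg
  intro k _
  rw [vN_dephase_pure]
  exact mul_nonneg (h0 k) (H2_nonneg (h1 k))

lemma CfSet_bddBelow (ρ : Matrix ι ι ℂ) : BddBelow (CfSet ρ) :=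
  ⟨0, fun _ hx => CfSet_nonneg hx⟩

lemma CfSet_nonempty {ρ : Matrix ι ι ℂ} (hρ : IsDensity ρ) : (CfSet ρ).Nonempty := by
  obtain ⟨hpsd, htr⟩ := hρ
  have hA : ρ.IsHermitian := hpsd.1
  set U : Matrix ι ι ℂ := (hA.eigenvectorUnitary : Matrix ι ι ℂ) with hU
  have hU2 : star U * U = 1 :=
    mul_eq_one_comm.mp ((Matrix.mem_unitaryGroup_iff).mp hA.eigenvectorUnitary.2)
  have hunit : ∀ i, IsUnitVec (fun a => U a i) := by
    intro i
    have h1 : (star U * U) i i = 1 := by rw [hU2]; simp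
    rw [Matrix.mul_apply] at h1
    have h2 : ∀ j, (star U) i j * U j i = ((‖U j i‖ ^ 2 : ℝ) : ℂ) := by
      intro j
      rw [Matrix.star_apply, show star (U j i) = starRingEnd ℂ (U j i) from rfl, mul_comm,
        RCLike.mul_conj]
      norm_cast
    rw [Finset.sum_congr rfl (fun j _ => h2 j), ← Complex.ofReal_sum] at h1
    exact_mod_cast h1
  have hdecomp : ρ = ∑ i, ((hA.eigenvalues i : ℝ) : ℂ) • pureState (fun a => U a i) := by
    ext a b
    have hsp : ρ = U * Matrix.diagonal (fun i => ((hA.eigenvalues i : ℝ) : ℂ)) * star U := by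
      simpa [Function.comp_def] using hA.spectral_theorem
    calc ρ a b
        = (U * Matrix.diagonal (fun i => ((hA.eigenvalues i : ℝ) : ℂ)) * star U : Matrix ι ι ℂ) a b := by
          rw [← hsp]
      _ = ∑ i, ((hA.eigenvalues i : ℝ) : ℂ) * (U a i * star (U b i)) := by
          rw [Matrix.mul_apply]
          refine Finset.sum_congr rfl fun i _ => ?_
          rw [Matrix.mul_diagonal, Matrix.star_apply]
          ring
      _ = (∑ i, ((hA.eigenvalues i : ℝ) : ℂ) • pureState (fun a => U a i)) a b := by
          rw [Matrix.sum_apply]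
          refine Finset.sum_congr rfl fun i _ => ?_
          rw [Matrix.smul_apply, smul_eq_mul]
          rfl
  exact ⟨_, mem_CfSet hA.eigenvalues _ (fun i => hpsd.eigenvalues_nonneg i) hunit hdecomp⟩


lemma kron_mem {ρ : Matrix ι ι ℂ} {σ : Matrix κ κ ℂ} (htrρ : ρ.trace = 1) (htrσ : σ.trace = 1)
    {x y : ℝ} (hx : x ∈ CfSet ρ) (hy : y ∈ CfSet σ) :
    x + y ∈ CfSet (Matrix.kroneckerMap (· * ·) ρ σ) := by
  obtain ⟨m, p, v, hp0, hv1, hpv, hxval⟩ := hx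
  obtain ⟨m', pw, w, hq0, hw1, hqw, hyval⟩ := hy
  have hp1 : ∑ k, p k = 1 := sum_coeff_eq_one htrρ hv1 hpv
  have hq1 : ∑ l, pw l = 1 := sum_coeff_eq_one htrσ hw1 hqw
  set coeff : Fin m × Fin m' → ℝ := fun kl => p kl.1 * pw kl.2 with hcoeff
  set vec : Fin m × Fin m' → (ι × κ) → ℂ := fun kl a => v kl.1 a.1 * w kl.2 a.2 with hvec
  have hunit : ∀ kl, IsUnitVec (vec kl) := by
    intro kl
    show ∑ a : ι × κ, ‖v kl.1 a.1 * w kl.2 a.2‖ ^ 2 = 1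
    rw [Fintype.sum_prod_type]
    calc ∑ i, ∑ j, ‖v kl.1 i * w kl.2 j‖ ^ 2
        = ∑ i, ∑ j, ‖v kl.1 i‖ ^ 2 * ‖w kl.2 j‖ ^ 2 :=
          Finset.sum_congr rfl fun i _ => Finset.sum_congr rfl fun j _ => by
            rw [norm_mul, mul_pow]
      _ = (∑ i, ‖v kl.1 i‖ ^ 2) * (∑ j, ‖w kl.2 j‖ ^ 2) := (Finset.sum_mul_sum ..).symm
      _ = 1 := by rw [hv1 kl.1, hw1 kl.2, one_mul]
  have hdecomp : Matrix.kroneckerMap (· * ·) ρ σ = ∑ kl, (coeff kl : ℂ) • pureState (vec kl) := by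
    ext a b
    rw [Matrix.kroneckerMap_apply, hpv, hqw, Matrix.sum_apply, Matrix.sum_apply,
      Finset.sum_mul_sum, Matrix.sum_apply, Fintype.sum_prod_type]
    refine Finset.sum_congr rfl fun k _ => Finset.sum_congr rfl fun l _ => ?_
    have hstar : star (v k b.1 * w l b.2) = star (v k b.1) * star (w l b.2) := star_mul' _ _
    simp only [Matrix.smul_apply, smul_eq_mul, pureState_apply', hcoeff, hvec]
    push_cast
    rw [hstar]
    ring
  have hx' : x = ∑ k, p k * H2 (v k) := by
    rw [hxval]
    exact Finset.sum_congr rfl fun k _ => by rw [vN_dephase_pure]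
  have hy' : y = ∑ l, pw l * H2 (w l) := by
    rw [hyval]
    exact Finset.sum_congr rfl fun l _ => by rw [vN_dephase_pure]
  have hval : ∑ kl, coeff kl * vN (dephase (pureState (vec kl))) = x + y := by
    have hterm : ∀ kl : Fin m × Fin m', coeff kl * vN (dephase (pureState (vec kl)))
        = p kl.1 * pw kl.2 * (H2 (v kl.1) + H2 (w kl.2)) := by
      intro kl
      rw [vN_dephase_pure]
      have hHH : H2 (vec kl) = H2 (v kl.1) + H2 (w kl.2) := by
        have h1 : (fun a : ι × κ => ‖vec kl a‖ ^ 2)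
            = fun a : ι × κ => ‖v kl.1 a.1‖ ^ 2 * ‖w kl.2 a.2‖ ^ 2 := by
          funext a
          show ‖v kl.1 a.1 * w kl.2 a.2‖ ^ 2 = _
          rw [norm_mul, mul_pow]
        show ent (fun a : ι × κ => ‖vec kl a‖ ^ 2) = _
        rw [h1]
        exact ent_prod _ _ (fun a => by positivity) (fun b => by positivity) (hv1 kl.1) (hw1 kl.2)
      rw [hHH]
    rw [Finset.sum_congr rfl fun kl _ => hterm kl, Fintype.sum_prod_type]
    have hrow : ∀ k, ∑ l, p k * pw l * (H2 (v k) + H2 (w l))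
        = p k * H2 (v k) + p k * (∑ l, pw l * H2 (w l)) := by
      intro k
      have hterm2 : ∀ l, p k * pw l * (H2 (v k) + H2 (w l))
          = p k * H2 (v k) * pw l + p k * (pw l * H2 (w l)) := fun l => by ring
      rw [Finset.sum_congr rfl fun l _ => hterm2 l, Finset.sum_add_distrib, ← Finset.mul_sum,
        hq1, mul_one, ← Finset.mul_sum]
    rw [Finset.sum_congr rfl fun k _ => hrow k, Finset.sum_add_distrib, ← Finset.sum_mul, hp1,
      one_mul, hx', hy']
  rw [← hval]
  exact mem_CfSet coeff vec (fun kl => mul_nonneg (hp0 _) (hq0 _)) hunit hdecomp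


lemma superadd {ρ : Matrix ι ι ℂ} {σ : Matrix κ κ ℂ} [Nonempty ι] [Nonempty κ]
    (htrρ : ρ.trace = 1) (htrσ : σ.trace = 1)
    {z : ℝ} (hz : z ∈ CfSet (Matrix.kroneckerMap (· * ·) ρ σ)) :
    sInf (CfSet ρ) + sInf (CfSet σ) ≤ z := by
  obtain ⟨m, p, ψ, hp0, hψ1, hdec, hzval⟩ := hz
  set t : Fin m → ι × κ → ℝ := fun k a => ‖ψ k a‖ ^ 2 with htdef
  have ht0 : ∀ k a, 0 ≤ t k a := fun k a => by positivity
  have htsum : ∀ k, ∑ a, t k a = 1 := fun k => hψ1 k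
  set q : Fin m → κ → ℝ := fun k j => ∑ i, t k (i, j) with hqdef
  set r : Fin m → ι → ℝ := fun k i => ∑ j, t k (i, j) with hrdef
  have hq0 : ∀ k j, 0 ≤ q k j := fun k j => Finset.sum_nonneg fun i _ => ht0 k _
  have hr0 : ∀ k i, 0 ≤ r k i := fun k i => Finset.sum_nonneg fun j _ => ht0 k _
  have htq : ∀ k i j, t k (i, j) ≤ q k j := fun k i j =>
    Finset.single_le_sum (fun b _ => ht0 k (b, j)) (Finset.mem_univ i)
  have htr : ∀ k i j, t k (i, j) ≤ r k i := fun k i j =>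
    Finset.single_le_sum (fun b _ => ht0 k (i, b)) (Finset.mem_univ j)
  have hentry : ∀ (a b : ι × κ), ρ a.1 b.1 * σ a.2 b.2
      = ∑ k, (p k : ℂ) * (ψ k a * star (ψ k b)) := by
    intro a b
    have h := congrArg (fun M : Matrix (ι × κ) (ι × κ) ℂ => M a b) hdec
    simp only [Matrix.kroneckerMap_apply] at h
    rw [h, Matrix.sum_apply]
    exact Finset.sum_congr rfl fun k _ => by rw [Matrix.smul_apply, smul_eq_mul]; rfl
  have hψq : ∀ k i j, q k j = 0 → ψ k (i, j) = 0 := by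
    intro k i j hq
    have h1 : t k (i, j) = 0 := le_antisymm (hq ▸ htq k i j) (ht0 k _)
    have : ‖ψ k (i, j)‖ = 0 := by
      have := pow_eq_zero_iff (n := 2) (by norm_num) |>.mp h1
      exact this
    exact norm_eq_zero.mp this
  have hψr : ∀ k i j, r k i = 0 → ψ k (i, j) = 0 := by
    intro k i j hr
    have h1 : t k (i, j) = 0 := le_antisymm (hr ▸ htr k i j) (ht0 k _)
    have : ‖ψ k (i, j)‖ = 0 := pow_eq_zero_iff (n := 2) (by norm_num) |>.mp h1
    exact norm_eq_zero.mp this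
  obtain ⟨i₀⟩ := ‹Nonempty ι›
  obtain ⟨j₀⟩ := ‹Nonempty κ›
  set e₁ : ι → ℂ := fun i => if i = i₀ then 1 else 0 with he₁def
  have he₁ : IsUnitVec e₁ := by
    show (∑ i, ‖if i = i₀ then (1 : ℂ) else 0‖ ^ 2) = 1
    rw [Finset.sum_eq_single i₀ (fun b _ hb => by simp [hb]) (fun h => absurd (Finset.mem_univ i₀) h)]
    simp
  set e₂ : κ → ℂ := fun j => if j = j₀ then 1 else 0 with he₂def
  have he₂ : IsUnitVec e₂ := by
    show (∑ j, ‖if j = j₀ then (1 : ℂ) else 0‖ ^ 2) = 1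
    rw [Finset.sum_eq_single j₀ (fun b _ hb => by simp [hb]) (fun h => absurd (Finset.mem_univ j₀) h)]
    simp
  set u : Fin m × κ → ι → ℂ := fun kj i =>
    if q kj.1 kj.2 = 0 then e₁ i
    else ψ kj.1 (i, kj.2) / ((Real.sqrt (q kj.1 kj.2) : ℝ) : ℂ) with hudef
  set w : Fin m × ι → κ → ℂ := fun ki j =>
    if r ki.1 ki.2 = 0 then e₂ j
    else ψ ki.1 (ki.2, j) / ((Real.sqrt (r ki.1 ki.2) : ℝ) : ℂ) with hwdef
  have husq : ∀ k j, q k j ≠ 0 → ∀ i, ‖u (k, j) i‖ ^ 2 = t k (i, j) / q k j := by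
    intro k j hq i
    show ‖if q k j = 0 then e₁ i else ψ k (i, j) / ((Real.sqrt (q k j) : ℝ) : ℂ)‖ ^ 2 = _
    rw [if_neg hq, norm_div, div_pow, Complex.norm_real, Real.norm_eq_abs,
      abs_of_nonneg (Real.sqrt_nonneg _), Real.sq_sqrt (hq0 k j)]
  have hwsq : ∀ k i, r k i ≠ 0 → ∀ j, ‖w (k, i) j‖ ^ 2 = t k (i, j) / r k i := by
    intro k i hr j
    show ‖if r k i = 0 then e₂ j else ψ k (i, j) / ((Real.sqrt (r k i) : ℝ) : ℂ)‖ ^ 2 = _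
    rw [if_neg hr, norm_div, div_pow, Complex.norm_real, Real.norm_eq_abs,
      abs_of_nonneg (Real.sqrt_nonneg _), Real.sq_sqrt (hr0 k i)]
  have hu1 : ∀ kj, IsUnitVec (u kj) := by
    rintro ⟨k, j⟩
    by_cases hq : q k j = 0
    · show (∑ i, ‖if q k j = 0 then e₁ i else _‖ ^ 2) = 1
      simp only [if_pos hq]
      exact he₁
    · show (∑ i, ‖u (k, j) i‖ ^ 2) = 1
      rw [Finset.sum_congr rfl fun i _ => husq k j hq i, ← Finset.sum_div]
      exact div_self hq
  have hw1 : ∀ ki, IsUnitVec (w ki) := by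
    rintro ⟨k, i⟩
    by_cases hr : r k i = 0
    · show (∑ j, ‖if r k i = 0 then e₂ j else _‖ ^ 2) = 1
      simp only [if_pos hr]
      exact he₂
    · show (∑ j, ‖w (k, i) j‖ ^ 2) = 1
      rw [Finset.sum_congr rfl fun j _ => hwsq k i hr j, ← Finset.sum_div]
      exact div_self hr
  -- decomposition of ρ
  have hρdec : ρ = ∑ kj : Fin m × κ, ((p kj.1 * q kj.1 kj.2 : ℝ) : ℂ) • pureState (u kj) := by
    ext a b
    rw [Matrix.sum_apply]
    have hterm : ∀ kj : Fin m × κ, (((p kj.1 * q kj.1 kj.2 : ℝ) : ℂ) • pureState (u kj)) a b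
        = (p kj.1 : ℂ) * (ψ kj.1 (a, kj.2) * star (ψ kj.1 (b, kj.2))) := by
      rintro ⟨k, j⟩
      rw [Matrix.smul_apply, smul_eq_mul, pureState_apply']
      by_cases hq : q k j = 0
      · rw [hψq k a j hq, hψq k b j hq]
        push_cast [hq]
        ring
      · have hqpos : 0 < q k j := (hq0 k j).lt_of_ne (Ne.symm hq)
        have hsq : ((Real.sqrt (q k j) : ℝ) : ℂ) ≠ 0 := by
          exact_mod_cast (Real.sqrt_ne_zero'.mpr hqpos)
        have hu_eq : ∀ i, u (k, j) i = ψ k (i, j) / ((Real.sqrt (q k j) : ℝ) : ℂ) := by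
          intro i
          show (if q k j = 0 then e₁ i else _) = _
          rw [if_neg hq]
        rw [hu_eq a, hu_eq b, star_div₀]
        rw [show star (((Real.sqrt (q k j) : ℝ) : ℂ)) = ((Real.sqrt (q k j) : ℝ) : ℂ) from
          Complex.conj_ofReal _]
        have hss : ((Real.sqrt (q k j) : ℝ) : ℂ) * ((Real.sqrt (q k j) : ℝ) : ℂ)
            = ((q k j : ℝ) : ℂ) := by
          rw [← Complex.ofReal_mul, Real.mul_self_sqrt (hq0 k j)]
        rw [div_mul_div_comm, hss]
        have hqc : ((q k j : ℝ) : ℂ) ≠ 0 := by exact_mod_cast hq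
        push_cast
        field_simp
    rw [Finset.sum_congr rfl fun kj _ => hterm kj]
    have hσtr : ∑ j, σ j j = 1 := htrσ
    calc ρ a b = ρ a b * ∑ j, σ j j := by rw [hσtr, mul_one]
      _ = ∑ j, ρ a b * σ j j := Finset.mul_sum ..
      _ = ∑ j, ∑ k, (p k : ℂ) * (ψ k (a, j) * star (ψ k (b, j))) :=
          Finset.sum_congr rfl fun j _ => hentry (a, j) (b, j)
      _ = ∑ kj : Fin m × κ, (p kj.1 : ℂ) * (ψ kj.1 (a, kj.2) * star (ψ kj.1 (b, kj.2))) := by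
          rw [Fintype.sum_prod_type, Finset.sum_comm]
  -- decomposition of σ
  have hσdec : σ = ∑ ki : Fin m × ι, ((p ki.1 * r ki.1 ki.2 : ℝ) : ℂ) • pureState (w ki) := by
    ext a b
    rw [Matrix.sum_apply]
    have hterm : ∀ ki : Fin m × ι, (((p ki.1 * r ki.1 ki.2 : ℝ) : ℂ) • pureState (w ki)) a b
        = (p ki.1 : ℂ) * (ψ ki.1 (ki.2, a) * star (ψ ki.1 (ki.2, b))) := by
      rintro ⟨k, i⟩
      rw [Matrix.smul_apply, smul_eq_mul, pureState_apply']
      by_cases hr : r k i = 0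
      · rw [hψr k i a hr, hψr k i b hr]
        push_cast [hr]
        ring
      · have hrpos : 0 < r k i := (hr0 k i).lt_of_ne (Ne.symm hr)
        have hw_eq : ∀ j, w (k, i) j = ψ k (i, j) / ((Real.sqrt (r k i) : ℝ) : ℂ) := by
          intro j
          show (if r k i = 0 then e₂ j else _) = _
          rw [if_neg hr]
        rw [hw_eq a, hw_eq b, star_div₀]
        rw [show star (((Real.sqrt (r k i) : ℝ) : ℂ)) = ((Real.sqrt (r k i) : ℝ) : ℂ) from
          Complex.conj_ofReal _]
        have hss : ((Real.sqrt (r k i) : ℝ) : ℂ) * ((Real.sqrt (r k i) : ℝ) : ℂ)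
            = ((r k i : ℝ) : ℂ) := by
          rw [← Complex.ofReal_mul, Real.mul_self_sqrt (hr0 k i)]
        rw [div_mul_div_comm, hss]
        have hrc : ((r k i : ℝ) : ℂ) ≠ 0 := by exact_mod_cast hr
        push_cast
        field_simp
    rw [Finset.sum_congr rfl fun ki _ => hterm ki]
    have hρtr : ∑ i, ρ i i = 1 := htrρ
    calc σ a b = (∑ i, ρ i i) * σ a b := by rw [hρtr, one_mul]
      _ = ∑ i, ρ i i * σ a b := Finset.sum_mul ..
      _ = ∑ i, ∑ k, (p k : ℂ) * (ψ k (i, a) * star (ψ k (i, b))) :=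
          Finset.sum_congr rfl fun i _ => hentry (i, a) (i, b)
      _ = ∑ ki : Fin m × ι, (p ki.1 : ℂ) * (ψ ki.1 (ki.2, a) * star (ψ ki.1 (ki.2, b))) := by
          rw [Fintype.sum_prod_type, Finset.sum_comm]
  -- rewrite the two bound sums
  have hA : ∑ kj : Fin m × κ, (p kj.1 * q kj.1 kj.2) * vN (dephase (pureState (u kj)))
      = ∑ k, p k * (∑ a : ι × κ, -(t k a * Real.logb 2 (t k a / q k a.2))) := by
    rw [Fintype.sum_prod_type]
    refine Finset.sum_congr rfl fun k _ => ?_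
    have hj : ∀ j, (p k * q k j) * vN (dephase (pureState (u (k, j))))
        = p k * ∑ i, -(t k (i, j) * Real.logb 2 (t k (i, j) / q k j)) := by
      intro j
      rw [vN_dephase_pure]
      by_cases hq : q k j = 0
      · have htz : ∀ i, t k (i, j) = 0 := fun i => le_antisymm (hq ▸ htq k i j) (ht0 k _)
        rw [Finset.sum_congr rfl fun i _ => by rw [htz i, zero_mul, neg_zero], hq]
        simp
      · have hH2 : H2 (u (k, j)) = ent (fun i => t k (i, j) / q k j) := by
          show ent _ = _
          congr 1
          funext i
          exact husq k j hq i
        rw [hH2, mul_assoc,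
          weighted_ent_eq (q k j) (fun i => t k (i, j)) (hq0 k j) (fun i => ht0 k _)
            (fun i => htq k i j)]
    rw [Finset.sum_congr rfl fun j _ => hj j, ← Finset.mul_sum]
    congr 1
    rw [Fintype.sum_prod_type, Finset.sum_comm]
  have hB : ∑ ki : Fin m × ι, (p ki.1 * r ki.1 ki.2) * vN (dephase (pureState (w ki)))
      = ∑ k, p k * (∑ a : ι × κ, -(t k a * Real.logb 2 (t k a / r k a.1))) := by
    rw [Fintype.sum_prod_type]
    refine Finset.sum_congr rfl fun k _ => ?_
    have hi : ∀ i, (p k * r k i) * vN (dephase (pureState (w (k, i))))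
        = p k * ∑ j, -(t k (i, j) * Real.logb 2 (t k (i, j) / r k i)) := by
      intro i
      rw [vN_dephase_pure]
      by_cases hr : r k i = 0
      · have htz : ∀ j, t k (i, j) = 0 := fun j => le_antisymm (hr ▸ htr k i j) (ht0 k _)
        rw [Finset.sum_congr rfl fun j _ => by rw [htz j, zero_mul, neg_zero], hr]
        simp
      · have hH2 : H2 (w (k, i)) = ent (fun j => t k (i, j) / r k i) := by
          show ent _ = _
          congr 1
          funext j
          exact hwsq k i hr j
        rw [hH2, mul_assoc,
          weighted_ent_eq (r k i) (fun j => t k (i, j)) (hr0 k i) (fun j => ht0 k _)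
            (fun j => htr k i j)]
    rw [Finset.sum_congr rfl fun i _ => hi i, ← Finset.mul_sum]
    congr 1
    rw [Fintype.sum_prod_type]
  have hCfρ : sInf (CfSet ρ) ≤ ∑ k, p k * (∑ a : ι × κ, -(t k a * Real.logb 2 (t k a / q k a.2))) := by
    rw [← hA]
    exact csInf_le (CfSet_bddBelow ρ)
      (mem_CfSet _ _ (fun kj => mul_nonneg (hp0 _) (hq0 _ _)) hu1 hρdec)
  have hCfσ : sInf (CfSet σ) ≤ ∑ k, p k * (∑ a : ι × κ, -(t k a * Real.logb 2 (t k a / r k a.1))) := by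
    rw [← hB]
    exact csInf_le (CfSet_bddBelow σ)
      (mem_CfSet _ _ (fun ki => mul_nonneg (hp0 _) (hr0 _ _)) hw1 hσdec)
  have hcond : ∀ k, (∑ a : ι × κ, -(t k a * Real.logb 2 (t k a / q k a.2)))
      + (∑ a : ι × κ, -(t k a * Real.logb 2 (t k a / r k a.1))) ≤ H2 (ψ k) :=
    fun k => condent_le_ent (t k) (ht0 k) (htsum k)
  have hz' : z = ∑ k, p k * H2 (ψ k) := by
    rw [hzval]
    exact Finset.sum_congr rfl fun k _ => by rw [vN_dephase_pure]
  calc sInf (CfSet ρ) + sInf (CfSet σ)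
      ≤ (∑ k, p k * (∑ a : ι × κ, -(t k a * Real.logb 2 (t k a / q k a.2))))
        + (∑ k, p k * (∑ a : ι × κ, -(t k a * Real.logb 2 (t k a / r k a.1)))) :=
        add_le_add hCfρ hCfσ
    _ = ∑ k, p k * ((∑ a : ι × κ, -(t k a * Real.logb 2 (t k a / q k a.2)))
        + (∑ a : ι × κ, -(t k a * Real.logb 2 (t k a / r k a.1)))) := by
        rw [← Finset.sum_add_distrib]
        exact Finset.sum_congr rfl fun k _ => by ring
    _ ≤ ∑ k, p k * H2 (ψ k) :=
        Finset.sum_le_sum fun k _ => mul_le_mul_of_nonneg_left (hcond k) (hp0 k)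
    _ = z := hz'.symm

/-- The coherence of formation is additive under tensor products. -/
theorem Cf_additive {d d' : ℕ} (ρ : Matrix (Fin d) (Fin d) ℂ)
    (σ : Matrix (Fin d') (Fin d') ℂ) (hρ : IsDensity ρ) (hσ : IsDensity σ) :
    Cf (Matrix.kroneckerMap (· * ·) ρ σ) = Cf ρ + Cf σ := by
  have hι : Nonempty (Fin d) := by
    rcases Nat.eq_zero_or_pos d with h | h
    · exfalso
      have h1 := hρ.2
      subst h
      simp [Matrix.trace, Finset.univ_eq_empty] at h1
    · exact ⟨⟨0, h⟩⟩
  have hκ : Nonempty (Fin d') := by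
    rcases Nat.eq_zero_or_pos d' with h | h
    · exfalso
      have h1 := hσ.2
      subst h
      simp [Matrix.trace, Finset.univ_eq_empty] at h1
    · exact ⟨⟨0, h⟩⟩
  obtain ⟨x₀, hx₀⟩ := CfSet_nonempty hρ
  obtain ⟨y₀, hy₀⟩ := CfSet_nonempty hσ
  have hKne : (CfSet (Matrix.kroneckerMap (· * ·) ρ σ)).Nonempty :=
    ⟨x₀ + y₀, kron_mem hρ.2 hσ.2 hx₀ hy₀⟩
  apply le_antisymm
  · have step1 : ∀ x ∈ CfSet ρ, ∀ y ∈ CfSet σ,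
        Cf (Matrix.kroneckerMap (· * ·) ρ σ) ≤ x + y := fun x hx y hy =>
      csInf_le (CfSet_bddBelow _) (kron_mem hρ.2 hσ.2 hx hy)
    have step2 : ∀ x ∈ CfSet ρ, Cf (Matrix.kroneckerMap (· * ·) ρ σ) - x ≤ Cf σ := by
      intro x hx
      rw [Cf_eq_sInf σ]
      refine le_csInf ⟨y₀, hy₀⟩ fun y hy => ?_
      have := step1 x hx y hy
      linarith
    have step3 : Cf (Matrix.kroneckerMap (· * ·) ρ σ) - Cf σ ≤ Cf ρ := by
      rw [Cf_eq_sInf ρ]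
      refine le_csInf ⟨x₀, hx₀⟩ fun x hx => ?_
      have := step2 x hx
      linarith
    linarith
  · rw [Cf_eq_sInf (Matrix.kroneckerMap (· * ·) ρ σ)]
    exact le_csInf hKne fun z hz => superadd hρ.2 hσ.2 hz

end Coherence
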